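/- Let H be a polarizer with 0 ∈ H and u : ℝ^N → [0,∞) measurable. Then the polarization u^H is equimeasurable with u: for every t > 0, the Lebesgue measure of {x : u^H(x) > t} equals the Lebesgue measure of {x : u(x) > t}. Consequently ‖u^H‖_{L^p(ℝ^N)} = ‖u‖_{L^p(ℝ^N)} for every 1 ≤ p < ∞. -/

import Mathlib

open MeasureTheory
open scoped ENNReal

noncomputable def reflectH {N : ℕ} (α : EuclideanSpace ℝ (Fin N)) (β : ℝ)
    (x : EuclideanSpace ℝ (Fin N)) : EuclideanSpace ℝ (Fin N) :=
  x - (2 * ((inner ℝ x α : ℝ) - β)) • α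

noncomputable def polarize {N : ℕ} (α : EuclideanSpace ℝ (Fin N)) (β : ℝ)
    (u : EuclideanSpace ℝ (Fin N) → ℝ) (x : EuclideanSpace ℝ (Fin N)) : ℝ :=
  if (inner ℝ x α : ℝ) ≤ β then max (u x) (u (reflectH α β x))
  else min (u x) (u (reflectH α β x))

section aux

variable {N : ℕ} {α : EuclideanSpace ℝ (Fin N)} {β : ℝ}

lemma inner_reflectH (hα : ‖α‖ = 1) (x : EuclideanSpace ℝ (Fin N)) :
    (inner ℝ (reflectH α β x) α : ℝ) = 2 * β - inner ℝ x α := by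
  have hαα : (inner ℝ α α : ℝ) = 1 := by
    rw [real_inner_self_eq_norm_sq, hα]; norm_num
  simp only [reflectH, inner_sub_left, real_inner_smul_left, hαα]
  ring

lemma reflectH_involutive (hα : ‖α‖ = 1) (x : EuclideanSpace ℝ (Fin N)) :
    reflectH α β (reflectH α β x) = x := by
  have h := inner_reflectH (β := β) hα x
  rw [reflectH, h]
  rw [reflectH]
  module

lemma continuous_innerα : Continuous fun x : EuclideanSpace ℝ (Fin N) => (inner ℝ x α : ℝ) :=
  continuous_id.inner continuous_const

lemma reflectH_measurePreserving (hα : ‖α‖ = 1) :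
    MeasurePreserving (reflectH α β) volume volume := by
  set e : EuclideanSpace ℝ (Fin N) ≃ₗᵢ[ℝ] EuclideanSpace ℝ (Fin N) :=
    (Submodule.reflection (ℝ ∙ α)).trans (LinearIsometryEquiv.neg ℝ) with he
  have hfun : reflectH α β = (fun y => y + (2 * β) • α) ∘ e := by
    funext x
    have hrefl := Submodule.reflection_singleton_apply (𝕜 := ℝ) α x
    rw [hα] at hrefl
    simp only [RCLike.ofReal_real_eq_id, id_eq, one_pow, div_one] at hrefl
    have : e x = x - ((2 : ℝ) * (inner ℝ α x : ℝ)) • α := by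
      have : e x = -(Submodule.reflection (ℝ ∙ α) x) := rfl
      rw [this, hrefl]
      module
    simp only [Function.comp_apply, this, reflectH]
    rw [real_inner_comm x α]
    module
  rw [hfun]
  exact (measurePreserving_add_right volume ((2 * β) • α)).comp e.measurePreserving

lemma measurable_polarize (hmu : Measurable u) (hα : ‖α‖ = 1) :
    Measurable (polarize α β u) := by
  have hσ : Measurable (reflectH α β) := (reflectH_measurePreserving hα).measurable
  exact Measurable.ite
    (measurableSet_le continuous_innerα.measurable measurable_const)
    (hmu.max (hmu.comp hσ)) (hmu.min (hmu.comp hσ))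

lemma polarize_pair (hα : ‖α‖ = 1) (u : EuclideanSpace ℝ (Fin N) → ℝ)
    (φ : ℝ → ℝ≥0∞) (x : EuclideanSpace ℝ (Fin N)) :
    φ (polarize α β u x) + φ (polarize α β u (reflectH α β x)) =
      φ (u x) + φ (u (reflectH α β x)) := by
  have hσσ : reflectH α β (reflectH α β x) = x := reflectH_involutive hα x
  have hin : (inner ℝ (reflectH α β x) α : ℝ) = 2 * β - inner ℝ x α := inner_reflectH hα x
  by_cases h : (inner ℝ x α : ℝ) ≤ β
  · by_cases h2 : (inner ℝ (reflectH α β x) α : ℝ) ≤ β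
    · have hb : (inner ℝ x α : ℝ) = β := by rw [hin] at h2; linarith
      have hx : reflectH α β x = x := by
        rw [reflectH, hb]; simp
      simp [polarize, hx, h]
    · simp only [polarize, if_pos h, if_neg h2, hσσ]
      rcases le_total (u x) (u (reflectH α β x)) with hc | hc
      · rw [max_eq_right hc, min_eq_right hc, add_comm]
      · rw [max_eq_left hc, min_eq_left hc]
  · have h2 : (inner ℝ (reflectH α β x) α : ℝ) ≤ β := by
      rw [hin]; push_neg at h; linarith
    simp only [polarize, if_neg h, if_pos h2, hσσ]
    rcases le_total (u x) (u (reflectH α β x)) with hc | hc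
    · rw [min_eq_left hc, max_eq_left hc]
    · rw [min_eq_right hc, max_eq_right hc, add_comm]

lemma lintegral_polarize (hα : ‖α‖ = 1) (u : EuclideanSpace ℝ (Fin N) → ℝ)
    (hmu : Measurable u) (φ : ℝ → ℝ≥0∞) (hφ : Measurable φ) :
    ∫⁻ x, φ (polarize α β u x) = ∫⁻ x, φ (u x) := by
  have hσ : MeasurePreserving (reflectH α β) (volume : Measure (EuclideanSpace ℝ (Fin N)))
      volume := reflectH_measurePreserving hα
  have hmp : Measurable (polarize α β u) := measurable_polarize hmu hα
  have key : (∫⁻ x, φ (polarize α β u x) + φ (polarize α β u (reflectH α β x))) =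
      ∫⁻ x, φ (u x) + φ (u (reflectH α β x)) := by
    simp_rw [polarize_pair hα u φ]
  rw [lintegral_add_left (f := fun x => φ (polarize α β u x)) (hφ.comp hmp),
    lintegral_add_left (f := fun x => φ (u x)) (hφ.comp hmu),
    hσ.lintegral_comp (f := fun x => φ (polarize α β u x)) (hφ.comp hmp),
    hσ.lintegral_comp (f := fun x => φ (u x)) (hφ.comp hmu)] at key
  have h2 : (2 : ℝ≥0∞) ≠ 0 := two_ne_zero
  have h2t : (2 : ℝ≥0∞) ≠ ⊤ := ENNReal.ofNat_ne_top
  rw [← two_mul, ← two_mul] at key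
  calc ∫⁻ x, φ (polarize α β u x)
      = 2⁻¹ * (2 * ∫⁻ x, φ (polarize α β u x)) := by
        rw [← mul_assoc, ENNReal.inv_mul_cancel h2 h2t, one_mul]
    _ = 2⁻¹ * (2 * ∫⁻ x, φ (u x)) := by rw [key]
    _ = ∫⁻ x, φ (u x) := by rw [← mul_assoc, ENNReal.inv_mul_cancel h2 h2t, one_mul]

end aux

/-- polarization is equimeasurable with the original nonnegative
measurable function, and preserves all `L^p` norms, `1 ≤ p < ∞`. -/
theorem stmt6 {N : ℕ} (α : EuclideanSpace ℝ (Fin N)) (β : ℝ)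
    (hα : ‖α‖ = 1) (hβ : 0 ≤ β)
    (u : EuclideanSpace ℝ (Fin N) → ℝ) (hmu : Measurable u) (hu : ∀ x, 0 ≤ u x) :
    (∀ t : ℝ, 0 < t →
      volume {x | t < polarize α β u x} = volume {x | t < u x}) ∧
    (∀ p : ℝ≥0∞, 1 ≤ p → p ≠ ⊤ →
      eLpNorm (polarize α β u) p volume = eLpNorm u p volume) := by
  have hmp : Measurable (polarize α β u) := measurable_polarize hmu hα
  have hind : ∀ (f : EuclideanSpace ℝ (Fin N) → ℝ), Measurable f → ∀ t : ℝ,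
      (∫⁻ x, (Set.Ioi t).indicator (fun _ => (1 : ℝ≥0∞)) (f x)) = volume {x | t < f x} := by
    intro f hf t
    have heq : ∀ x, (Set.Ioi t).indicator (fun _ => (1 : ℝ≥0∞)) (f x) =
        Set.indicator {x | t < f x} (fun _ => (1 : ℝ≥0∞)) x := by
      intro x
      by_cases h : t < f x <;> simp [Set.indicator, h, Set.mem_Ioi]
    simp_rw [heq]
    have : MeasurableSet {x | t < f x} := measurableSet_lt measurable_const hf
    exact lintegral_indicator_one this
  constructor
  · intro t _
    rw [← hind _ hmp t, ← hind _ hmu t]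
    exact lintegral_polarize hα u hmu _ (measurable_one.indicator measurableSet_Ioi)
  · intro p hp1 hpt
    have hp0 : p ≠ 0 := by
      intro h; rw [h] at hp1; exact (by norm_num : ¬ (1:ℝ≥0∞) ≤ 0) hp1
    rw [eLpNorm_eq_lintegral_rpow_enorm_toReal hp0 hpt, eLpNorm_eq_lintegral_rpow_enorm_toReal hp0 hpt]
    congr 1
    have hφ : Measurable fun s : ℝ => ‖s‖ₑ ^ p.toReal := by
      exact measurable_enorm.pow_const _
    exact lintegral_polarize hα u hmu _ hφ
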